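/- arXiv:1606.08101 — 4 statements merged into one kernel-verified Lean document; each statement's English description precedes it below -/
import Mathlib

section
/- If a controller $u$ with $q(t)=u(v(t))$ stabilizes the dynamics $v(t+1)=Xu(v(t))+v^{par}$ into the box $[\underline v,\bar v]$ (i.e., $\mathrm{dist}(v(t),[\underline v,\bar v])\to 0$), and $u$ is continuous, then $v^{par}$ lies in the closure of the bounded set $M=\{v - X u(\tilde v) : v,\tilde v \in [\underline v,\bar v]\}$. In particular, the set of $v^{par}$ for which stabilization is possible is bounded. -/
/-- If a continuous controller `q(t) = u(v(t))` stabilizes `v(t+1) = X u(v(t)) + v^par`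
into the box `[v̲, v̄]`, then `v^par` lies in the closure of the bounded set
`M = {v - X u(ṽ) : v, ṽ ∈ [v̲, v̄]}`; in particular `M` is bounded. -/
theorem stmt_3 (n : ℕ) (X : Matrix (Fin n) (Fin n) ℝ)
    (vlo vhi : Fin n → ℝ) (hle : vlo ≤ vhi)
    (u : (Fin n → ℝ) → (Fin n → ℝ)) (hu : Continuous u)
    (vpar : Fin n → ℝ) (v : ℕ → (Fin n → ℝ))
    (hdyn : ∀ t, v (t + 1) = X.mulVec (u (v t)) + vpar)
    (hstab : Filter.Tendsto (fun t => Metric.infDist (v t) (Set.Icc vlo vhi))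
      Filter.atTop (nhds 0)) :
    vpar ∈ closure {w : Fin n → ℝ |
        ∃ p ∈ Set.Icc vlo vhi, ∃ q ∈ Set.Icc vlo vhi, w = p - X.mulVec (u q)} ∧
      Bornology.IsBounded {w : Fin n → ℝ |
        ∃ p ∈ Set.Icc vlo vhi, ∃ q ∈ Set.Icc vlo vhi, w = p - X.mulVec (u q)} := by
  classical
  set S : Set (Fin n → ℝ) := Set.Icc vlo vhi with hS
  have hSne : S.Nonempty := ⟨vlo, Set.mem_Icc.2 ⟨le_refl _, hle⟩⟩
  have hScomp : IsCompact S := isCompact_Icc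
  -- the continuous linear map given by X
  set T : (Fin n → ℝ) →L[ℝ] (Fin n → ℝ) :=
    LinearMap.toContinuousLinearMap (Matrix.mulVecLin X) with hT
  have hTapp : ∀ a, T a = X.mulVec a := fun a => rfl
  set M : Set (Fin n → ℝ) :=
    {w : Fin n → ℝ | ∃ p ∈ Set.Icc vlo vhi, ∃ q ∈ Set.Icc vlo vhi,
      w = p - X.mulVec (u q)} with hM
  -- M is the image of a compact set under a continuous map
  have hMimage : M = (fun pq : (Fin n → ℝ) × (Fin n → ℝ) => pq.1 - T (u pq.2)) '' (S ×ˢ S) := by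
    ext w
    constructor
    · rintro ⟨p, hp, q, hq, rfl⟩
      exact ⟨(p, q), ⟨hp, hq⟩, rfl⟩
    · rintro ⟨⟨p, q⟩, ⟨hp, hq⟩, rfl⟩
      exact ⟨p, hp, q, hq, rfl⟩
  have hMcomp : IsCompact M := by
    rw [hMimage]
    exact (hScomp.prod hScomp).image
      (continuous_fst.sub (T.continuous.comp (hu.comp continuous_snd)))
  refine ⟨?_, hMcomp.isBounded⟩
  -- nearest-point projection onto S
  have hproj : ∀ x : Fin n → ℝ, ∃ y ∈ S, Metric.infDist x S = dist x y :=
    fun x => hScomp.exists_infDist_eq_dist hSne x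
  choose π hπS hπd using hproj
  have hdistπ : Filter.Tendsto (fun t => dist (v t) (π (v t))) Filter.atTop (nhds 0) := by
    simpa only [hπd] using hstab
  -- the approximating sequence in M
  set w : ℕ → (Fin n → ℝ) := fun t => π (v (t + 1)) - X.mulVec (u (π (v t))) with hw
  have hwM : ∀ t, w t ∈ M := fun t => ⟨π (v (t + 1)), hπS _, π (v t), hπS _, rfl⟩
  -- the compact thickening on which u is uniformly continuous
  set K : Set (Fin n → ℝ) := Metric.cthickening 1 S with hK
  have hKcomp : IsCompact K := hScomp.cthickening
  have huc : UniformContinuousOn u K :=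
    hKcomp.uniformContinuousOn_of_continuous hu.continuousOn
  have hSK : S ⊆ K := Metric.self_subset_cthickening S
  -- w t → vpar
  have hwlim : Filter.Tendsto w Filter.atTop (nhds vpar) := by
    rw [Metric.tendsto_atTop]
    intro ε hε
    have hε2 : 0 < ε / 2 := by positivity
    have hC1 : (0:ℝ) < ‖T‖ + 1 := by positivity
    have hε' : 0 < ε / (2 * (‖T‖ + 1)) := by positivity
    obtain ⟨δ, hδ, hδu⟩ := (Metric.uniformContinuousOn_iff).1 huc _ hε'
    obtain ⟨N1, hN1⟩ := (Metric.tendsto_atTop.1 hdistπ) (min δ 1) (lt_min hδ one_pos)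
    obtain ⟨N2, hN2⟩ := (Metric.tendsto_atTop.1 hdistπ) (ε / 2) hε2
    refine ⟨max N1 N2, fun t ht => ?_⟩
    have ht1 : N1 ≤ t := le_trans (le_max_left _ _) ht
    have ht2 : N2 ≤ t + 1 := le_trans (le_trans (le_max_right _ _) ht) (Nat.le_succ t)
    have h1 := hN1 t ht1
    have h2 := hN2 (t + 1) ht2
    simp only [Real.dist_eq, sub_zero, abs_of_nonneg dist_nonneg] at h1 h2
    -- v t ∈ K
    have hvK : v t ∈ K := by
      apply Metric.mem_cthickening_of_dist_le (v t) (π (v t)) 1 S (hπS _)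
      exact le_trans (le_of_lt h1) (min_le_right _ _)
    have hπK : π (v t) ∈ K := hSK (hπS _)
    have hud : dist (u (π (v t))) (u (v t)) < ε / (2 * (‖T‖ + 1)) := by
      apply hδu _ hπK _ hvK
      rw [dist_comm]
      exact lt_of_lt_of_le h1 (min_le_left _ _)
    -- assemble
    have hvpar : vpar = v (t + 1) - X.mulVec (u (v t)) := by
      rw [hdyn t]; abel
    have hsplit : w t - vpar =
        (π (v (t + 1)) - v (t + 1)) + T (u (v t) - u (π (v t))) := by
      rw [hvpar, hw]
      simp only [hTapp, Matrix.mulVec_sub]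
      abel
    have hTnorm : ‖T (u (v t) - u (π (v t)))‖ < ε / 2 := by
      calc ‖T (u (v t) - u (π (v t)))‖ ≤ ‖T‖ * ‖u (v t) - u (π (v t))‖ := T.le_opNorm _
        _ ≤ (‖T‖ + 1) * ‖u (v t) - u (π (v t))‖ := by
            apply mul_le_mul_of_nonneg_right (by linarith) (norm_nonneg _)
        _ < (‖T‖ + 1) * (ε / (2 * (‖T‖ + 1))) := by
            apply mul_lt_mul_of_pos_left _ hC1
            rw [← dist_eq_norm, dist_comm]
            exact hud
        _ = ε / 2 := by field_simp
    calc dist (w t) vpar = ‖w t - vpar‖ := dist_eq_norm _ _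
      _ = ‖(π (v (t + 1)) - v (t + 1)) + T (u (v t) - u (π (v t)))‖ := by rw [hsplit]
      _ ≤ ‖π (v (t + 1)) - v (t + 1)‖ + ‖T (u (v t) - u (π (v t)))‖ := norm_add_le _ _
      _ < ε / 2 + ε / 2 := by
          apply add_lt_add _ hTnorm
          rw [← dist_eq_norm, dist_comm]
          exact h2
      _ = ε := by ring
  exact mem_closure_of_tendsto hwlim (Filter.Eventually.of_forall hwM)
end

section
/- Consider Algorithm 1: at each update, $\alpha_i(t) = q_i(t)-q_i(t-1) = -\epsilon d_i(v_i(t'))$ for some time $t'$ (or $\alpha_i(t)=0$ if no update), and $\gamma_i(t) = \hat{d}_i(v_i(t'))$. Then $\gamma(t)^T \alpha(t) = -\frac{1}{\epsilon}\|\alpha(t)\|^2 - \sum_{i=1}^n M_i |\alpha_i(t)|$, where $M_i = \frac{\bar{v}_i - \underline{v}_i}{2}$. -/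
open scoped Matrix

/-- Lemma 3 of the paper: if for each bus `i` either `α_i = -ε d_i(w_i)` and
`γ_i = d̂_i(w_i)` for some voltage `w_i` (update), or `α_i = 0` (no update), then
`γᵀα = -(1/ε)‖α‖² - ∑ᵢ Mᵢ |αᵢ|` with `Mᵢ = (v̄ᵢ - v̲ᵢ)/2`. -/
theorem stmt_6 (n : ℕ) (vlo vhi : Fin n → ℝ) (hle : vlo ≤ vhi)
    (ε : ℝ) (hε : 0 < ε) (α γ : Fin n → ℝ)
    (h : ∀ i, (∃ w : ℝ,
        α i = -ε * (max (w - vhi i) 0 - max (vlo i - w) 0) ∧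
        γ i = w - (vhi i + vlo i) / 2) ∨ α i = 0) :
    γ ⬝ᵥ α = -(1 / ε) * ∑ i, (α i) ^ 2 - ∑ i, (vhi i - vlo i) / 2 * |α i| := by
  have key : ∀ i, γ i * α i = -(1/ε) * (α i)^2 - (vhi i - vlo i)/2 * |α i| := by
    intro i
    have hlei := hle i
    rcases h i with ⟨w, ha, hg⟩ | ha
    · rcases le_total w (vlo i) with hw | hw
      · have h1 : max (w - vhi i) 0 = 0 := max_eq_right (by linarith)
        have h2 : max (vlo i - w) 0 = vlo i - w := max_eq_left (by linarith)
        rw [h1, h2] at ha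
        have habs : |α i| = α i := abs_of_nonneg (by rw [ha]; nlinarith)
        rw [habs, ha, hg]; field_simp; ring
      · rcases le_total w (vhi i) with hw2 | hw2
        · have h1 : max (w - vhi i) 0 = 0 := max_eq_right (by linarith)
          have h2 : max (vlo i - w) 0 = 0 := max_eq_right (by linarith)
          rw [h1, h2] at ha
          simp only [ha, sub_zero, mul_zero, neg_mul]
          simp [abs_of_nonneg]
        · have h1 : max (w - vhi i) 0 = w - vhi i := max_eq_left (by linarith)
          have h2 : max (vlo i - w) 0 = 0 := max_eq_right (by linarith)
          rw [h1, h2] at ha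
          have habs : |α i| = -α i := abs_of_nonpos (by rw [ha]; nlinarith)
          rw [habs, ha, hg]; field_simp; ring
    · simp [ha]
  calc γ ⬝ᵥ α = ∑ i, γ i * α i := rfl
    _ = ∑ i, (-(1/ε) * (α i)^2 - (vhi i - vlo i)/2 * |α i|) :=
        Finset.sum_congr rfl fun i _ => key i
    _ = -(1 / ε) * ∑ i, (α i) ^ 2 - ∑ i, (vhi i - vlo i) / 2 * |α i| := by
        rw [Finset.sum_sub_distrib, Finset.mul_sum]
end

section
/- Let $D : \mathbb{R}^m \to \mathbb{R}$ be concave quadratic with constant Hessian $\nabla^2 D = -A$, $A$ symmetric PSD with $\sigma_{\max}(A) \le 2\sigma$. Suppose a sequence $\lambda(t)$ with increments $\pi(t)$ satisfies for each $t$: $\mu(t)^T\pi(t) \ge \frac{1}{\epsilon}\|\pi(t)\|^2$ and $\|\nabla D(\lambda(t-1)) - \mu(t)\| \le 2K \sum_{t'=t-T}^{t-1}\|\pi(t')\|$ for constants $K, T \ge 0$. If $D$ is bounded above and $\epsilon < \frac{1}{\sigma + 2KT}$, then $\sum_{t=1}^{\infty}\|\pi(t)\|^2 < \infty$ and $\pi(t)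 \to 0$. -/
open scoped Matrix

/-- Euclidean norm of a finite real vector. -/
noncomputable def enorm16 {m : ℕ} (x : Fin m → ℝ) : ℝ := Real.sqrt (∑ i, x i ^ 2)

lemma enorm16_nonneg {m : ℕ} (x : Fin m → ℝ) : 0 ≤ enorm16 x := Real.sqrt_nonneg _

lemma enorm16_sq {m : ℕ} (x : Fin m → ℝ) : enorm16 x ^ 2 = ∑ i, x i ^ 2 :=
  Real.sq_sqrt (Finset.sum_nonneg fun _ _ => sq_nonneg _)

lemma dot_self_eq_enorm16_sq {m : ℕ} (x : Fin m → ℝ) : x ⬝ᵥ x = enorm16 x ^ 2 := by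
  rw [enorm16_sq]; simp [dotProduct, sq]

lemma abs_dot_le_enorm16 {m : ℕ} (x y : Fin m → ℝ) : |x ⬝ᵥ y| ≤ enorm16 x * enorm16 y := by
  have h2 : (x ⬝ᵥ y) ^ 2 ≤ (∑ i, x i ^ 2) * ∑ i, y i ^ 2 := by
    simpa [dotProduct] using Finset.sum_mul_sq_le_sq_mul_sq Finset.univ x y
  calc |x ⬝ᵥ y| = Real.sqrt ((x ⬝ᵥ y) ^ 2) := (Real.sqrt_sq_eq_abs _).symm
    _ ≤ Real.sqrt ((∑ i, x i ^ 2) * ∑ i, y i ^ 2) := Real.sqrt_le_sqrt h2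
    _ = enorm16 x * enorm16 y := Real.sqrt_mul (Finset.sum_nonneg fun _ _ => sq_nonneg _) _

lemma abs_apply_le_enorm16 {m : ℕ} (x : Fin m → ℝ) (i : Fin m) : |x i| ≤ enorm16 x := by
  rw [← Real.sqrt_sq_eq_abs]
  exact Real.sqrt_le_sqrt (Finset.single_le_sum (fun j _ => sq_nonneg (x j)) (Finset.mem_univ i))

/-- Abstract version of Lemma 7: `D` is concave quadratic with constant Hessian `-A`
(`A` symmetric PSD with `σ_max(A) ≤ 2σ`, expressed via its quadratic form) and
gradient `g`. If the increments `π(t) = λ(t) - λ(t-1)` satisfy the projection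
inequality `μ(t)ᵀπ(t) ≥ (1/ε)‖π(t)‖²` and the delayed-gradient error bound
`‖∇D(λ(t-1)) - μ(t)‖ ≤ 2K ∑_{t'=t-T}^{t-1} ‖π(t')‖`, `D` is bounded above, and
`ε < 1/(σ + 2KT)`, then `∑ ‖π(t)‖² < ∞` and `π(t) → 0`. -/
theorem stmt_16 (m : ℕ) (A : Matrix (Fin m) (Fin m) ℝ) (hAsym : A.IsHermitian)
    (σ K : ℝ) (T : ℕ) (hσ : 0 ≤ σ) (hK : 0 ≤ K)
    (hApsd : ∀ x : Fin m → ℝ, 0 ≤ x ⬝ᵥ A.mulVec x)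
    (hAbound : ∀ x : Fin m → ℝ, x ⬝ᵥ A.mulVec x ≤ 2 * σ * (x ⬝ᵥ x))
    (D : (Fin m → ℝ) → ℝ) (g : (Fin m → ℝ) → (Fin m → ℝ))
    (hD : ∀ x y : Fin m → ℝ,
      D y = D x + g x ⬝ᵥ (y - x) - (1 / 2) * ((y - x) ⬝ᵥ A.mulVec (y - x)))
    (hDbdd : ∃ B : ℝ, ∀ x, D x ≤ B)
    (lam π μ : ℕ → Fin m → ℝ)
    (hπ : ∀ t, π (t + 1) = lam (t + 1) - lam t) (hπ0 : π 0 = 0)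
    (ε : ℝ) (hε : 0 < ε) (hεsmall : ε < 1 / (σ + 2 * K * T))
    (hproj : ∀ t : ℕ, 1 ≤ t → μ t ⬝ᵥ π t ≥ (1 / ε) * enorm16 (π t) ^ 2)
    (herr : ∀ t : ℕ, 1 ≤ t →
      enorm16 (g (lam (t - 1)) - μ t) ≤ 2 * K * ∑ t' ∈ Finset.Icc (t - T) (t - 1), enorm16 (π t')) :
    Summable (fun t => enorm16 (π t) ^ 2) ∧
      Filter.Tendsto π Filter.atTop (nhds 0) := by
  obtain ⟨B, hB⟩ := hDbdd
  have hpn0 : enorm16 (π 0) = 0 := by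
    simp [hπ0, enorm16]
  -- positivity of the effective step-size constant
  have hs : (0:ℝ) < σ + 2 * K * T := by
    rcases lt_or_eq_of_le (by positivity : (0:ℝ) ≤ σ + 2 * K * T) with h | h
    · exact h
    · rw [← h] at hεsmall; simp at hεsmall; linarith
  have hc : 0 < 1 / ε - σ - 2 * K * T := by
    have h1 : ε * (σ + 2 * K * T) < 1 := (lt_div_iff₀ hs).mp hεsmall
    have h2 : σ + 2 * K * T < 1 / ε := (lt_div_iff₀ hε).mpr (by linarith [h1])
    linarith
  -- per-step inequality
  have key : ∀ t : ℕ, (1 / ε - σ - K * T) * enorm16 (π (t + 1)) ^ 2 ≤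
      (D (lam (t + 1)) - D (lam t)) +
        K * ∑ t' ∈ Finset.Icc (t + 1 - T) t, enorm16 (π t') ^ 2 := by
    intro t
    set p := enorm16 (π (t + 1)) with hp
    have hpnn : 0 ≤ p := enorm16_nonneg _
    set S := ∑ t' ∈ Finset.Icc (t + 1 - T) t, enorm16 (π t') with hS
    set Q := ∑ t' ∈ Finset.Icc (t + 1 - T) t, enorm16 (π t') ^ 2 with hQ
    have hDt : D (lam (t + 1)) = D (lam t) + g (lam t) ⬝ᵥ π (t + 1)
        - (1 / 2) * (π (t + 1) ⬝ᵥ A.mulVec (π (t + 1))) := by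
      have := hD (lam t) (lam (t + 1))
      rwa [← hπ t] at this
    have hproj' : μ (t + 1) ⬝ᵥ π (t + 1) ≥ (1 / ε) * p ^ 2 := hproj (t + 1) (by omega)
    have herr' : enorm16 (g (lam t) - μ (t + 1)) ≤ 2 * K * S := by
      simpa using herr (t + 1) (by omega)
    have hAb : π (t + 1) ⬝ᵥ A.mulVec (π (t + 1)) ≤ 2 * σ * p ^ 2 := by
      have := hAbound (π (t + 1))
      rwa [dot_self_eq_enorm16_sq] at this
    have hsplit : g (lam t) ⬝ᵥ π (t + 1)
        = μ (t + 1) ⬝ᵥ π (t + 1) + (g (lam t) - μ (t + 1)) ⬝ᵥ π (t + 1) := by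
      rw [sub_dotProduct]; ring
    have hcs : -(enorm16 (g (lam t) - μ (t + 1)) * p) ≤ (g (lam t) - μ (t + 1)) ⬝ᵥ π (t + 1) :=
      (abs_le.mp (abs_dot_le_enorm16 _ _)).1
    have hSnn : 0 ≤ S := Finset.sum_nonneg fun _ _ => enorm16_nonneg _
    have herr2 : enorm16 (g (lam t) - μ (t + 1)) * p ≤ 2 * K * S * p :=
      mul_le_mul_of_nonneg_right herr' hpnn
    have hcross : 2 * S * p ≤ Q + T * p ^ 2 := by
      have h1 : 2 * S * p = ∑ t' ∈ Finset.Icc (t + 1 - T) t, 2 * enorm16 (π t') * p := by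
        rw [hS, Finset.mul_sum, Finset.sum_mul]
      have h2 : ∑ t' ∈ Finset.Icc (t + 1 - T) t, 2 * enorm16 (π t') * p
          ≤ ∑ t' ∈ Finset.Icc (t + 1 - T) t, (enorm16 (π t') ^ 2 + p ^ 2) :=
        Finset.sum_le_sum fun i _ => two_mul_le_add_sq _ _
      have h3 : ∑ t' ∈ Finset.Icc (t + 1 - T) t, (enorm16 (π t') ^ 2 + p ^ 2)
          = Q + ((Finset.Icc (t + 1 - T) t).card : ℝ) * p ^ 2 := by
        rw [Finset.sum_add_distrib, Finset.sum_const, nsmul_eq_mul, hQ]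
      have h4 : ((Finset.Icc (t + 1 - T) t).card : ℝ) ≤ (T : ℝ) := by
        rw [Nat.card_Icc]
        have h : t + 1 - (t + 1 - T) ≤ T := by omega
        exact_mod_cast h
      have h5 : ((Finset.Icc (t + 1 - T) t).card : ℝ) * p ^ 2 ≤ (T : ℝ) * p ^ 2 :=
        mul_le_mul_of_nonneg_right h4 (sq_nonneg _)
      linarith [h1 ▸ h2.trans_eq h3]
    have hcross' : K * (2 * S * p) ≤ K * (Q + T * p ^ 2) := mul_le_mul_of_nonneg_left hcross hK
    nlinarith [hcs, herr2, hcross', hproj', hAb, hDt, hsplit]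
  -- partial sums
  have hQsum : ∀ N : ℕ, ∑ t ∈ Finset.range N,
      ∑ t' ∈ Finset.Icc (t + 1 - T) t, enorm16 (π t') ^ 2
      ≤ (T : ℝ) * ∑ t' ∈ Finset.range N, enorm16 (π t') ^ 2 := by
    intro N
    have step1 : ∑ t ∈ Finset.range N, ∑ t' ∈ Finset.Icc (t + 1 - T) t, enorm16 (π t') ^ 2
        = ∑ t ∈ Finset.range N, ∑ t' ∈ Finset.range N,
            (if t' ∈ Finset.Icc (t + 1 - T) t then enorm16 (π t') ^ 2 else 0) := by
      refine Finset.sum_congr rfl fun t ht => ?_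
      rw [Finset.sum_ite_mem]
      congr 1
      refine (Finset.inter_eq_right.mpr ?_).symm
      intro x hx
      rw [Finset.mem_Icc] at hx
      rw [Finset.mem_range] at ht ⊢
      omega
    rw [step1, Finset.sum_comm]
    have step2 : ∀ t' ∈ Finset.range N,
        ∑ t ∈ Finset.range N, (if t' ∈ Finset.Icc (t + 1 - T) t then enorm16 (π t') ^ 2 else 0)
          ≤ (T : ℝ) * enorm16 (π t') ^ 2 := by
      intro t' _
      have hle : ∑ t ∈ Finset.range N,
          (if t' ∈ Finset.Icc (t + 1 - T) t then enorm16 (π t') ^ 2 else 0)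
          ≤ ∑ t ∈ Finset.range N,
          (if t ∈ Finset.Ico t' (t' + T) then enorm16 (π t') ^ 2 else 0) := by
        refine Finset.sum_le_sum fun t _ => ?_
        by_cases h1 : t' ∈ Finset.Icc (t + 1 - T) t
        · have h2 : t ∈ Finset.Ico t' (t' + T) := by
            rw [Finset.mem_Icc] at h1; rw [Finset.mem_Ico]; omega
          simp [h1, h2]
        · simp [h1]
          positivity
      refine hle.trans ?_
      rw [Finset.sum_ite_mem, Finset.sum_const, nsmul_eq_mul]
      refine mul_le_mul_of_nonneg_right ?_ (sq_nonneg _)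
      have : (Finset.range N ∩ Finset.Ico t' (t' + T)).card ≤ T := by
        calc (Finset.range N ∩ Finset.Ico t' (t' + T)).card
            ≤ (Finset.Ico t' (t' + T)).card := Finset.card_le_card Finset.inter_subset_right
          _ = T := by rw [Nat.card_Ico]; omega
      exact_mod_cast this
    calc ∑ t' ∈ Finset.range N, ∑ t ∈ Finset.range N,
          (if t' ∈ Finset.Icc (t + 1 - T) t then enorm16 (π t') ^ 2 else 0)
        ≤ ∑ t' ∈ Finset.range N, (T : ℝ) * enorm16 (π t') ^ 2 := Finset.sum_le_sum step2
      _ = (T : ℝ) * ∑ t' ∈ Finset.range N, enorm16 (π t') ^ 2 := by rw [Finset.mul_sum]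
  have hshift : ∀ N : ℕ, ∑ t' ∈ Finset.range N, enorm16 (π t') ^ 2
      ≤ ∑ t ∈ Finset.range N, enorm16 (π (t + 1)) ^ 2 := by
    intro N
    cases N with
    | zero => simp
    | succ M =>
      rw [Finset.sum_range_succ']
      rw [hpn0]
      simp only [ne_eq, OfNat.ofNat_ne_zero, not_false_eq_true, zero_pow, add_zero]
      exact Finset.sum_le_sum_of_subset_of_nonneg
        (Finset.range_subset_range.mpr (Nat.le_succ M)) (fun i _ _ => sq_nonneg _)
  have hbound : ∀ N : ℕ, ∑ t ∈ Finset.range N, enorm16 (π (t + 1)) ^ 2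
      ≤ (B - D (lam 0)) / (1 / ε - σ - 2 * K * T) := by
    intro N
    rw [le_div_iff₀ hc]
    set P := ∑ t ∈ Finset.range N, enorm16 (π (t + 1)) ^ 2 with hP
    have h1 : (1 / ε - σ - K * T) * P ≤ (D (lam N) - D (lam 0)) +
        K * ∑ t ∈ Finset.range N, ∑ t' ∈ Finset.Icc (t + 1 - T) t, enorm16 (π t') ^ 2 := by
      have := Finset.sum_le_sum (fun t (_ : t ∈ Finset.range N) => key t)
      rw [Finset.sum_add_distrib, Finset.sum_range_sub (fun t => D (lam t)),
        ← Finset.mul_sum, ← Finset.mul_sum] at this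
      exact this
    have h2 := hQsum N
    have h3 := hshift N
    have e1 : K * (∑ t ∈ Finset.range N, ∑ t' ∈ Finset.Icc (t + 1 - T) t, enorm16 (π t') ^ 2)
        ≤ K * ((T : ℝ) * ∑ t' ∈ Finset.range N, enorm16 (π t') ^ 2) :=
      mul_le_mul_of_nonneg_left h2 hK
    have e2 : K * ((T : ℝ) * ∑ t' ∈ Finset.range N, enorm16 (π t') ^ 2)
        ≤ K * ((T : ℝ) * P) := by
      refine mul_le_mul_of_nonneg_left ?_ hK
      exact mul_le_mul_of_nonneg_left h3 (Nat.cast_nonneg T)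
    have hBN := hB (lam N)
    nlinarith [h1, e1, e2, hBN]
  have hsum1 : Summable (fun t => enorm16 (π (t + 1)) ^ 2) :=
    summable_of_sum_range_le (fun _ => sq_nonneg _) hbound
  have hsum : Summable (fun t => enorm16 (π t) ^ 2) := (summable_nat_add_iff 1).mp hsum1
  refine ⟨hsum, ?_⟩
  have h0 : Filter.Tendsto (fun t => enorm16 (π t) ^ 2) Filter.atTop (nhds 0) :=
    hsum.tendsto_atTop_zero
  have h1 : Filter.Tendsto (fun t => enorm16 (π t)) Filter.atTop (nhds 0) := by
    have hc2 := (Real.continuous_sqrt.tendsto' 0 0 Real.sqrt_zero).comp h0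
    convert hc2 using 1
    funext t
    exact (Real.sqrt_sq (enorm16_nonneg _)).symm
  rw [tendsto_pi_nhds]
  intro i
  have : Filter.Tendsto (fun t => π t i) Filter.atTop (nhds 0) :=
    squeeze_zero_norm (fun t => abs_apply_le_enorm16 (π t) i) h1
  simpa using this
end

section
/- Let $X$ be symmetric positive definite and consider the dual function $D(\bar\lambda,\underline\lambda) = -\frac{1}{2}(\underline{\lambda}-\bar{\lambda})^T X (\underline{\lambda}-\bar{\lambda}) + \bar{\lambda}^T(v^{par}-\bar{v}) + \underline{\lambda}^T(\underline{v}-v^{par})$ with $\underline{v} < \bar{v}$ componentwise. Then the maximizer of $D$ over $\bar\lambda, \underline\lambda \ge 0$ is unique: if $(\bar\lambda', \underline\lambda')$ maximizes $D$, then for each $i$ at least one of $\bar\lambda'_i, \underline\lambda'_i$ is zero, and $\underline\lambda' - \bar\lambda'$ is uniquely determined, hence $(\bar\lambda', \underline\lambda')$ is uniquely determined. -/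
open scoped Matrix

/-- Uniqueness of the dual maximizer (Theorem 3's dual step): with `X` symmetric
positive definite, `v̲ < v̄`, a feasible primal problem, and the dual function
`D(λ̄,λ̲) = -½(λ̲-λ̄)ᵀX(λ̲-λ̄) + λ̄ᵀ(v^par-v̄) + λ̲ᵀ(v̲-v^par)`, any maximizer over the
nonnegative orthant has, for each `i`, at least one of `λ̄ᵢ, λ̲ᵢ` zero; the difference
`λ̲-λ̄` is the same for all maximizers, and the maximizer itself is unique. -/
theorem stmt_17 (n : ℕ) (X : Matrix (Fin n) (Fin n) ℝ)
    (hXsym : X.IsHermitian) (hXpd : X.PosDef)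
    (vpar vlo vhi : Fin n → ℝ) (hlt : ∀ i, vlo i < vhi i)
    (hfeas : ∃ q : Fin n → ℝ, vlo ≤ X.mulVec q + vpar ∧ X.mulVec q + vpar ≤ vhi)
    (D : (Fin n → ℝ) → (Fin n → ℝ) → ℝ)
    (hD : ∀ lamU lamL : Fin n → ℝ, D lamU lamL =
      -(1 / 2) * ((lamL - lamU) ⬝ᵥ X.mulVec (lamL - lamU)) +
        lamU ⬝ᵥ (vpar - vhi) + lamL ⬝ᵥ (vlo - vpar))
    (pU pL qU qL : Fin n → ℝ)
    (hpU : 0 ≤ pU) (hpL : 0 ≤ pL) (hqU : 0 ≤ qU) (hqL : 0 ≤ qL)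
    (hpmax : ∀ lamU lamL : Fin n → ℝ, 0 ≤ lamU → 0 ≤ lamL → D lamU lamL ≤ D pU pL)
    (hqmax : ∀ lamU lamL : Fin n → ℝ, 0 ≤ lamU → 0 ≤ lamL → D lamU lamL ≤ D qU qL) :
    (∀ i, pU i = 0 ∨ pL i = 0) ∧ pL - pU = qL - qU ∧ pU = qU ∧ pL = qL := by
  -- symmetry of the bilinear form
  have hXt : Xᵀ = X := by
    have := hXsym.eq
    rwa [Matrix.conjTranspose_eq_transpose_of_trivial] at this
  have hsym : ∀ a b : Fin n → ℝ, a ⬝ᵥ X.mulVec b = b ⬝ᵥ X.mulVec a := by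
    intro a b
    rw [Matrix.dotProduct_mulVec, ← Matrix.mulVec_transpose, hXt, dotProduct_comm]
  -- complementarity for any maximizer
  have comp : ∀ (U L : Fin n → ℝ), 0 ≤ U → 0 ≤ L →
      (∀ lamU lamL : Fin n → ℝ, 0 ≤ lamU → 0 ≤ lamL → D lamU lamL ≤ D U L) →
      ∀ i, U i = 0 ∨ L i = 0 := by
    intro U L hU hL hmax i
    by_contra h
    push_neg at h
    obtain ⟨h1, h2⟩ := h
    have hU0 : 0 < U i := lt_of_le_of_ne (hU i) (Ne.symm h1)
    have hL0 : 0 < L i := lt_of_le_of_ne (hL i) (Ne.symm h2)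
    set t : ℝ := min (U i) (L i) with ht
    have ht0 : 0 < t := lt_min hU0 hL0
    set e : Fin n → ℝ := Pi.single i t with he
    have hUe : 0 ≤ U - e := by
      intro j
      by_cases hj : j = i
      · subst hj
        simp only [Pi.sub_apply, Pi.zero_apply, he, Pi.single_eq_same, sub_nonneg]
        exact min_le_left _ _
      · simp only [Pi.sub_apply, Pi.zero_apply, he, Pi.single_eq_of_ne hj, sub_zero]
        exact hU j
    have hLe : 0 ≤ L - e := by
      intro j
      by_cases hj : j = i
      · subst hj
        simp only [Pi.sub_apply, Pi.zero_apply, he, Pi.single_eq_same, sub_nonneg]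
        exact min_le_right _ _
      · simp only [Pi.sub_apply, Pi.zero_apply, he, Pi.single_eq_of_ne hj, sub_zero]
        exact hL j
    have hdiff : (L - e) - (U - e) = L - U := by
      funext j; simp
    have key : D (U - e) (L - e) = D U L + t * (vhi i - vlo i) := by
      rw [hD, hD, hdiff]
      simp only [he, sub_dotProduct, single_dotProduct, Pi.sub_apply]
      ring
    have hle := hmax (U - e) (L - e) hUe hLe
    rw [key] at hle
    nlinarith [mul_pos ht0 (sub_pos.mpr (hlt i))]
  have hcompP := comp pU pL hpU hpL hpmax
  have hcompQ := comp qU qL hqU hqL hqmax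
  -- equal objective values
  have hDeq : D pU pL = D qU qL :=
    le_antisymm (hqmax pU pL hpU hpL) (hpmax qU qL hqU hqL)
  -- midpoint argument
  set a : Fin n → ℝ := pL - pU with ha
  set b : Fin n → ℝ := qL - qU with hb
  have hexp : ∀ u v : Fin n → ℝ, (u + v) ⬝ᵥ X.mulVec (u + v)
      = u ⬝ᵥ X.mulVec u + v ⬝ᵥ X.mulVec v + 2 * (u ⬝ᵥ X.mulVec v) := by
    intro u v
    rw [Matrix.mulVec_add, dotProduct_add, add_dotProduct,
      add_dotProduct, hsym v u]
    ring
  set mU : Fin n → ℝ := (1/2 : ℝ) • (pU + qU) with hmU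
  set mL : Fin n → ℝ := (1/2 : ℝ) • (pL + qL) with hmL
  have hmU0 : 0 ≤ mU := by
    intro j
    have := add_nonneg (hpU j) (hqU j)
    simp only [hmU, Pi.smul_apply, Pi.add_apply, Pi.zero_apply, smul_eq_mul]
    linarith
  have hmL0 : 0 ≤ mL := by
    intro j
    have := add_nonneg (hpL j) (hqL j)
    simp only [hmL, Pi.smul_apply, Pi.add_apply, Pi.zero_apply, smul_eq_mul]
    linarith
  have hmdiff : mL - mU = (1/2 : ℝ) • (a + b) := by
    funext j
    simp only [hmU, hmL, ha, hb, Pi.smul_apply, Pi.add_apply, Pi.sub_apply, smul_eq_mul]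
    ring
  have hsdot : ∀ (c : ℝ) (v : Fin n → ℝ),
      (c • v) ⬝ᵥ X.mulVec (c • v) = c^2 * (v ⬝ᵥ X.mulVec v) := by
    intro c v
    rw [smul_dotProduct, Matrix.mulVec_smul, dotProduct_smul]
    simp [smul_eq_mul]; ring
  have hmidlin : mU ⬝ᵥ (vpar - vhi) + mL ⬝ᵥ (vlo - vpar)
      = (1/2) * (pU ⬝ᵥ (vpar - vhi) + pL ⬝ᵥ (vlo - vpar))
        + (1/2) * (qU ⬝ᵥ (vpar - vhi) + qL ⬝ᵥ (vlo - vpar)) := by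
    rw [hmU, hmL, smul_dotProduct, smul_dotProduct,
      add_dotProduct, add_dotProduct]
    simp [smul_eq_mul]; ring
  have hmid : D mU mL = (D pU pL + D qU qL) / 2
      + (1/8) * ((a - b) ⬝ᵥ X.mulVec (a - b)) := by
    rw [hD mU mL, hD pU pL, hD qU qL, hmdiff, hsdot]
    have h1 : (a + b) ⬝ᵥ X.mulVec (a + b)
        = a ⬝ᵥ X.mulVec a + b ⬝ᵥ X.mulVec b + 2 * (a ⬝ᵥ X.mulVec b) := hexp a b
    have h2 : (a - b) ⬝ᵥ X.mulVec (a - b)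
        = a ⬝ᵥ X.mulVec a + b ⬝ᵥ X.mulVec b - 2 * (a ⬝ᵥ X.mulVec b) := by
      have := hexp a (-b)
      simp only [Matrix.mulVec_neg, dotProduct_neg, neg_dotProduct,
        neg_neg] at this
      rw [sub_eq_add_neg, this, ha, hb]
      ring
    rw [h1, h2]
    linarith [hmidlin]
  have hmle : D mU mL ≤ D pU pL := hpmax mU mL hmU0 hmL0
  have hQle : (a - b) ⬝ᵥ X.mulVec (a - b) ≤ 0 := by
    rw [hmid, hDeq] at hmle
    linarith
  have hab : a = b := by
    by_contra hne
    have hne0 : a - b ≠ 0 := sub_ne_zero.mpr hne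
    have := hXpd.dotProduct_mulVec_pos hne0
    simp only [star_trivial] at this
    linarith
  have hdiffeq : pL - pU = qL - qU := hab
  refine ⟨hcompP, hdiffeq, ?_, ?_⟩ <;>
  · funext i
    have hd := congrFun hdiffeq i
    simp only [Pi.sub_apply] at hd
    have n1 : (0:ℝ) ≤ pU i := hpU i
    have n2 : (0:ℝ) ≤ pL i := hpL i
    have n3 : (0:ℝ) ≤ qU i := hqU i
    have n4 : (0:ℝ) ≤ qL i := hqL i
    rcases hcompP i with h1 | h1 <;> rcases hcompQ i with h2 | h2 <;> linarith
end
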